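/- For each β ∈ (1/2,1) let (m̄_k^β)_{k≥1} be a nondecreasing sequence of positive integers satisfying m̄_k^β ≤ k·m̄_1^β for all k ≥ 1 and β/(1−β) − 2 < m̄_1^β < β/(1−β) + 1. Set r = r(β) = (β−1)/β. Then, as β → 1⁻: (a) β(1−β) · (1/β²) Σ_{k=1}^∞ [k(k−1) r^{k−2} + 2k m̄_k^β r^{k−1} + m̄_k^β(m̄_k^β−1) r^k] → 1; (b) β(1−β) · (1/β²) Σ_{k=1}^∞ [−k(k+m̄_k^β) r^{k−1} − m̄_k^β(k+m̄_k^β) r^k] → 0; (c) β(1−β) · (1/β²) Σ_{k=1}^∞ (k+m̄_k^β)(k+m̄_k^β+1) r^k → −1. (These three sums are, respectively, ∂²_α Θ^β, ∂_α∂_β Θ^β and ∂²_β Θ^β evaluated at the diagonal point (β,β); hence the rescaled second differential of Θ^β at (β,β) converges to the quadratic form x² − y² as β → 1⁻.) -/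

import Mathlib

open Filter Topology
noncomputable def Sconst5 : ℝ := ∑' j : ℕ, ((j : ℝ) + 1) ^ 2 * (1/2 : ℝ) ^ j

lemma summable_sq_geom5 {x : ℝ} (hx0 : 0 ≤ x) (hx1 : x < 1) :
    Summable (fun j : ℕ => ((j : ℝ) + 1) ^ 2 * x ^ j) := by
  have hn : ‖x‖ < 1 := by rwa [Real.norm_eq_abs, abs_of_nonneg hx0]
  have h2 := summable_pow_mul_geometric_of_norm_lt_one (R := ℝ) 2 hn
  have h1 := summable_pow_mul_geometric_of_norm_lt_one (R := ℝ) 1 hn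
  have h0 := summable_pow_mul_geometric_of_norm_lt_one (R := ℝ) 0 hn
  refine ((h2.add (h1.mul_left 2)).add h0).congr fun j => ?_
  push_cast
  ring

lemma tendsto_id5 : Tendsto (fun β : ℝ => β) (𝓝[<] (1:ℝ)) (𝓝 1) :=
  tendsto_id.mono_right nhdsWithin_le_nhds

lemma tendsto_x5 : Tendsto (fun β : ℝ => (1-β)/β) (𝓝[<] (1:ℝ)) (𝓝 0) := by
  have : Tendsto (fun β : ℝ => (1-β)/β) (𝓝[<] (1:ℝ)) (𝓝 ((1-1)/1)) :=
    (tendsto_const_nhds.sub tendsto_id5).div tendsto_id5 one_ne_zero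
  simpa using this

lemma tail_tendsto5 (G : ℝ → ℕ → ℝ)
    (hb : ∀ᶠ β in 𝓝[<] (1:ℝ), ∀ j : ℕ, |G β j| ≤ 100 * ((j:ℝ)+1)^2 * ((1-β)/β)^j) :
    Tendsto (fun β => ((1-β)/β) * ∑' j, G β j) (𝓝[<] (1:ℝ)) (𝓝 0) := by
  have hShalf : Summable (fun j : ℕ => ((j : ℝ) + 1) ^ 2 * (1/2 : ℝ) ^ j) :=
    summable_sq_geom5 (by norm_num) (by norm_num)
  have hS : 0 ≤ Sconst5 := tsum_nonneg (fun j => by positivity)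
  apply squeeze_zero_norm' (a := fun β => (100*Sconst5) * ((1-β)/β))
  · filter_upwards [hb, Ioo_mem_nhdsLT_of_mem
      (show (1:ℝ) ∈ Set.Ioc (2/3:ℝ) 1 by norm_num)] with β hbβ hβ
    have hβ0 : (0:ℝ) < β := lt_trans (by norm_num) hβ.1
    have hx0 : 0 < (1-β)/β := div_pos (by linarith [hβ.2]) hβ0
    have hxh : (1-β)/β ≤ 1/2 := by
      rw [div_le_div_iff₀ hβ0 (by norm_num)]
      linarith [hβ.1]
    have hx1 : (1-β)/β < 1 := lt_of_le_of_lt hxh (by norm_num)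
    set x := (1-β)/β with hxdef
    have hsumx : Summable (fun j : ℕ => ((j : ℝ) + 1) ^ 2 * x ^ j) :=
      summable_sq_geom5 hx0.le hx1
    have hsumg : Summable (fun j : ℕ => 100 * (((j:ℝ)+1)^2 * x^j)) := hsumx.mul_left 100
    have h1 : ‖∑' j, G β j‖ ≤ ∑' j : ℕ, 100 * (((j:ℝ)+1)^2 * x^j) := by
      refine tsum_of_norm_bounded hsumg.hasSum fun j => ?_
      rw [Real.norm_eq_abs]
      calc |G β j| ≤ 100 * ((j:ℝ)+1)^2 * x^j := hbβ j
        _ = 100 * (((j:ℝ)+1)^2 * x^j) := by ring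
    have h2 : ∑' j : ℕ, 100 * (((j:ℝ)+1)^2 * x^j) ≤ 100 * Sconst5 := by
      rw [tsum_mul_left]
      have : (∑' j : ℕ, ((j:ℝ)+1)^2 * x^j) ≤ Sconst5 := by
        refine Summable.tsum_le_tsum (fun j => ?_) hsumx hShalf
        gcongr
      linarith
    calc ‖x * ∑' j, G β j‖ = |x| * ‖∑' j, G β j‖ := by
          rw [norm_mul, Real.norm_eq_abs]
      _ ≤ x * (100 * Sconst5) := by
          rw [abs_of_pos hx0]
          exact mul_le_mul_of_nonneg_left (h1.trans h2) hx0.le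
      _ = 100 * Sconst5 * x := by ring
  · have := tendsto_x5.const_mul (100*Sconst5)
    simpa using this

lemma main_part5 (F : ℝ → ℕ → ℝ) (L : ℝ)
    (hbound : ∀ᶠ β in 𝓝[<] (1:ℝ), ∀ j : ℕ,
      |F β (j+1)| ≤ 100 * ((j:ℝ)+1)^2 * ((1-β)/β)^j)
    (hhead : Tendsto (fun β => ((1-β)/β) * F β 0) (𝓝[<] (1:ℝ)) (𝓝 L)) :
    Tendsto (fun β => β*(1-β)*(1/β^2) * ∑' j, F β j) (𝓝[<] (1:ℝ)) (𝓝 L) := by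
  have htail := tail_tendsto5 (fun β j => F β (j+1)) hbound
  have h := hhead.add htail
  rw [add_zero] at h
  refine Tendsto.congr' ?_ h
  filter_upwards [hbound, Ioo_mem_nhdsLT_of_mem
      (show (1:ℝ) ∈ Set.Ioc (1/2:ℝ) 1 by norm_num)] with β hb hβ
  have hβ0 : (0:ℝ) < β := lt_trans (by norm_num) hβ.1
  have hx0 : 0 < (1-β)/β := div_pos (by linarith [hβ.2]) hβ0
  have hx1 : (1-β)/β < 1 := by
    rw [div_lt_one hβ0]; linarith [hβ.1]
  have hsum1 : Summable (fun j => F β (j+1)) := by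
    refine Summable.of_norm_bounded (g := fun j : ℕ => 100 * (((j:ℝ)+1)^2 * ((1-β)/β)^j))
      ((summable_sq_geom5 hx0.le hx1).mul_left 100) fun j => ?_
    rw [Real.norm_eq_abs]
    calc |F β (j+1)| ≤ 100 * ((j:ℝ)+1)^2 * ((1-β)/β)^j := hb j
      _ = 100 * (((j:ℝ)+1)^2 * ((1-β)/β)^j) := by ring
  have hsum : Summable (F β) := (summable_nat_add_iff 1).mp hsum1
  show ((1-β)/β) * F β 0 + ((1-β)/β) * ∑' j, F β (j+1) = _
  rw [Summable.tsum_eq_zero_add hsum]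
  field_simp

lemma head_v5 (m : ℝ → ℕ → ℕ)
    (hm1 : ∀ β ∈ Set.Ioo (1 / 2 : ℝ) 1,
      β / (1 - β) - 2 < (m β 1 : ℝ) ∧ (m β 1 : ℝ) < β / (1 - β) + 1) :
    Tendsto (fun β => ((1-β)/β) * (m β 1 : ℝ)) (𝓝[<] (1:ℝ)) (𝓝 1) := by
  have hl : Tendsto (fun β : ℝ => 1 - 2*((1-β)/β)) (𝓝[<] (1:ℝ)) (𝓝 1) := by
    have := (tendsto_x5.const_mul 2).const_sub 1
    simpa using this
  have hu : Tendsto (fun β : ℝ => 1 + (1-β)/β) (𝓝[<] (1:ℝ)) (𝓝 1) := by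
    have := tendsto_x5.const_add 1
    simpa using this
  refine tendsto_of_tendsto_of_tendsto_of_le_of_le' hl hu ?_ ?_
  · filter_upwards [Ioo_mem_nhdsLT_of_mem
      (show (1:ℝ) ∈ Set.Ioc (1/2:ℝ) 1 by norm_num)] with β hβ
    have hβ0 : (0:ℝ) < β := lt_trans (by norm_num) hβ.1
    have h1β : (0:ℝ) < 1 - β := by linarith [hβ.2]
    have hx0 : 0 < (1-β)/β := div_pos h1β hβ0
    have h := (hm1 β hβ).1
    have h2 : ((1-β)/β) * (β/(1-β) - 2) ≤ ((1-β)/β) * (m β 1 : ℝ) :=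
      mul_le_mul_of_nonneg_left h.le hx0.le
    calc 1 - 2*((1-β)/β) = ((1-β)/β) * (β/(1-β) - 2) := by
          field_simp
      _ ≤ _ := h2
  · filter_upwards [Ioo_mem_nhdsLT_of_mem
      (show (1:ℝ) ∈ Set.Ioc (1/2:ℝ) 1 by norm_num)] with β hβ
    have hβ0 : (0:ℝ) < β := lt_trans (by norm_num) hβ.1
    have h1β : (0:ℝ) < 1 - β := by linarith [hβ.2]
    have hx0 : 0 < (1-β)/β := div_pos h1β hβ0
    have h := (hm1 β hβ).2
    have h2 : ((1-β)/β) * (m β 1 : ℝ) ≤ ((1-β)/β) * (β/(1-β) + 1) :=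
      mul_le_mul_of_nonneg_left h.le hx0.le
    calc ((1-β)/β) * (m β 1 : ℝ) ≤ ((1-β)/β) * (β/(1-β) + 1) := h2
      _ = 1 + (1-β)/β := by field_simp

lemma mx_bound5 (m : ℝ → ℕ → ℕ)
    (hlin : ∀ β ∈ Set.Ioo (1 / 2 : ℝ) 1, ∀ k : ℕ, 1 ≤ k → m β k ≤ k * m β 1)
    (hm1 : ∀ β ∈ Set.Ioo (1 / 2 : ℝ) 1,
      β / (1 - β) - 2 < (m β 1 : ℝ) ∧ (m β 1 : ℝ) < β / (1 - β) + 1)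
    (β : ℝ) (hβ : β ∈ Set.Ioo (1/2:ℝ) 1) (j : ℕ) :
    ((1-β)/β) * (m β (j+1) : ℝ) ≤ 2*((j:ℝ)+1) := by
  have hβ0 : (0:ℝ) < β := lt_trans (by norm_num) hβ.1
  have h1β : (0:ℝ) < 1 - β := by linarith [hβ.2]
  have hx0 : 0 < (1-β)/β := div_pos h1β hβ0
  have hx1 : (1-β)/β < 1 := by rw [div_lt_one hβ0]; linarith [hβ.1]
  have hm1' : ((1-β)/β) * (m β 1 : ℝ) ≤ 2 := by
    have h := (hm1 β hβ).2
    have h2 : ((1-β)/β) * (m β 1 : ℝ) ≤ ((1-β)/β) * (β/(1-β) + 1) :=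
      mul_le_mul_of_nonneg_left h.le hx0.le
    have h3 : ((1-β)/β) * (β/(1-β) + 1) = 1 + (1-β)/β := by field_simp
    rw [h3] at h2
    linarith
  have hlin' : (m β (j+1) : ℝ) ≤ ((j:ℝ)+1) * (m β 1 : ℝ) := by
    have := hlin β hβ (j+1) (by omega)
    calc (m β (j+1) : ℝ) ≤ ((j+1) * m β 1 : ℕ) := by exact_mod_cast this
      _ = ((j:ℝ)+1) * (m β 1 : ℝ) := by push_cast; ring
  calc ((1-β)/β) * (m β (j+1) : ℝ) ≤ ((1-β)/β) * (((j:ℝ)+1) * (m β 1 : ℝ)) :=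
        mul_le_mul_of_nonneg_left hlin' hx0.le
    _ = ((j:ℝ)+1) * (((1-β)/β) * (m β 1 : ℝ)) := by ring
    _ ≤ ((j:ℝ)+1) * 2 := mul_le_mul_of_nonneg_left hm1' (by positivity)
    _ = 2*((j:ℝ)+1) := by ring

lemma part_a5 (m : ℝ → ℕ → ℕ)
    (hpos : ∀ β ∈ Set.Ioo (1 / 2 : ℝ) 1, ∀ k : ℕ, 1 ≤ k → 1 ≤ m β k)
    (hlin : ∀ β ∈ Set.Ioo (1 / 2 : ℝ) 1, ∀ k : ℕ, 1 ≤ k → m β k ≤ k * m β 1)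
    (hm1 : ∀ β ∈ Set.Ioo (1 / 2 : ℝ) 1,
      β / (1 - β) - 2 < (m β 1 : ℝ) ∧ (m β 1 : ℝ) < β / (1 - β) + 1) :
    Tendsto (fun β : ℝ => β * (1 - β) * (1 / β ^ 2) *
        ∑' j : ℕ, (((j : ℝ) + 1) * j * ((β - 1) / β) ^ (j - 1)
          + 2 * ((j : ℝ) + 1) * (m β (j + 1) : ℝ) * ((β - 1) / β) ^ j
          + (m β (j + 1) : ℝ) * ((m β (j + 1) : ℝ) - 1) * ((β - 1) / β) ^ (j + 1)))
      (𝓝[<] (1 : ℝ)) (𝓝 1) := by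
  apply main_part5
  · filter_upwards [Ioo_mem_nhdsLT_of_mem
      (show (1:ℝ) ∈ Set.Ioc (1/2:ℝ) 1 by norm_num)] with β hβ j
    have hβ0 : (0:ℝ) < β := lt_trans (by norm_num) hβ.1
    have h1β : (0:ℝ) < 1 - β := by linarith [hβ.2]
    have hx0 : 0 < (1-β)/β := div_pos h1β hβ0
    have hx1 : (1-β)/β < 1 := by rw [div_lt_one hβ0]; linarith [hβ.1]
    have habs : |(β-1)/β| = (1-β)/β := by
      rw [abs_of_neg (by apply div_neg_of_neg_of_pos <;> linarith)]
      ring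
    set x := (1-β)/β with hxdef
    set r := (β-1)/β with hrdef
    set M : ℝ := (m β (j+1+1) : ℝ) with hMdef
    have hM1 : (1:ℝ) ≤ M := by
      have := hpos β hβ (j+1+1) (by omega)
      rw [hMdef]
      exact_mod_cast this
    have hMx : x * M ≤ 2*((j:ℝ)+2) := by
      have := mx_bound5 m hlin hm1 β hβ (j+1)
      push_cast at this
      linarith
    have hXj : (0:ℝ) ≤ x^j := by positivity
    simp only [Nat.add_sub_cancel]
    push_cast
    have e1 : |(((j:ℝ)+1)+1) * ((j:ℝ)+1) * r^j| = (((j:ℝ)+1)+1)*((j:ℝ)+1)*x^j := by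
      rw [abs_mul, abs_mul, abs_pow, habs,
        abs_of_nonneg (by positivity : (0:ℝ) ≤ ((j:ℝ)+1)+1),
        abs_of_nonneg (by positivity : (0:ℝ) ≤ (j:ℝ)+1)]
    have e2 : |2 * (((j:ℝ)+1)+1) * M * r^(j+1)| = 2*(((j:ℝ)+1)+1)*M*x^(j+1) := by
      rw [abs_mul, abs_mul, abs_mul, abs_pow, habs,
        abs_of_nonneg (by norm_num : (0:ℝ) ≤ (2:ℝ)),
        abs_of_nonneg (by positivity : (0:ℝ) ≤ ((j:ℝ)+1)+1),
        abs_of_nonneg (by linarith : (0:ℝ) ≤ M)]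
    have e3 : |M * (M-1) * r^(j+1+1)| = M*(M-1)*x^(j+1+1) := by
      rw [abs_mul, abs_mul, abs_pow, habs,
        abs_of_nonneg (by linarith : (0:ℝ) ≤ M),
        abs_of_nonneg (by linarith : (0:ℝ) ≤ M - 1)]
    calc |(((j:ℝ)+1)+1) * ((j:ℝ)+1) * r^j + 2 * (((j:ℝ)+1)+1) * M * r^(j+1)
          + M * (M-1) * r^(j+1+1)|
        ≤ |(((j:ℝ)+1)+1) * ((j:ℝ)+1) * r^j| + |2 * (((j:ℝ)+1)+1) * M * r^(j+1)|
          + |M * (M-1) * r^(j+1+1)| := abs_add_three _ _ _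
      _ = (((j:ℝ)+1)+1)*((j:ℝ)+1)*x^j + 2*(((j:ℝ)+1)+1)*M*x^(j+1)
          + M*(M-1)*x^(j+1+1) := by rw [e1, e2, e3]
      _ ≤ 100 * ((j:ℝ)+1)^2 * x^j := by
          have ha : (0:ℝ) ≤ (j:ℝ) := Nat.cast_nonneg j
          rw [pow_succ, pow_succ, pow_succ]
          have h1 := mul_le_mul_of_nonneg_right hMx hXj
          have hb2 : 2*((j:ℝ)+1+1)*M*(x^j*x) ≤ 4*((j:ℝ)+2)^2*x^j := by
            calc 2*((j:ℝ)+1+1)*M*(x^j*x) = 2*((j:ℝ)+2)*(x*M*x^j) := by ring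
              _ ≤ 2*((j:ℝ)+2)*(2*((j:ℝ)+2)*x^j) :=
                  mul_le_mul_of_nonneg_left h1 (by positivity)
              _ = 4*((j:ℝ)+2)^2*x^j := by ring
          have hsq : (x*M)^2 ≤ (2*((j:ℝ)+2))^2 :=
            pow_le_pow_left₀ (by positivity) hMx 2
          have hMM : M*(M-1)*x^2 ≤ (x*M)^2 := by
            nlinarith [mul_nonneg (by linarith : (0:ℝ) ≤ M) (sq_nonneg x)]
          have hb3 : M*(M-1)*(x^j*x*x) ≤ 4*((j:ℝ)+2)^2*x^j := by
            calc M*(M-1)*(x^j*x*x) = (M*(M-1)*x^2)*x^j := by ring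
              _ ≤ ((2*((j:ℝ)+2))^2)*x^j :=
                  mul_le_mul_of_nonneg_right (hMM.trans hsq) hXj
              _ = 4*((j:ℝ)+2)^2*x^j := by ring
          have hcoef : ((j:ℝ)+1+1)*((j:ℝ)+1)*x^j ≤ 2*((j:ℝ)+1)^2*x^j := by
            have h : ((j:ℝ)+1+1)*((j:ℝ)+1) ≤ 2*((j:ℝ)+1)^2 := by nlinarith
            exact mul_le_mul_of_nonneg_right h hXj
          have hsq2 : ((j:ℝ)+2)^2*x^j ≤ 4*((j:ℝ)+1)^2*x^j := by
            have h : ((j:ℝ)+2)^2 ≤ 4*((j:ℝ)+1)^2 := by nlinarith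
            exact mul_le_mul_of_nonneg_right h hXj
          have hP : (0:ℝ) ≤ ((j:ℝ)+1)^2*x^j := by positivity
          linarith
  · have hv := head_v5 m hm1
    have hlim : Tendsto (fun β : ℝ => 2*(((1-β)/β)*(m β 1:ℝ))
        - (((1-β)/β)*(m β 1:ℝ))*((((1-β)/β)*(m β 1:ℝ)) - (1-β)/β))
        (𝓝[<] (1:ℝ)) (𝓝 (2*1 - 1*(1-0))) :=
      (hv.const_mul 2).sub (hv.mul (hv.sub tendsto_x5))
    norm_num at hlim
    refine Tendsto.congr (fun β => ?_) hlim
    show _ = ((1-β)/β) * _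
    norm_num
    ring

lemma part_b5 (m : ℝ → ℕ → ℕ)
    (hpos : ∀ β ∈ Set.Ioo (1 / 2 : ℝ) 1, ∀ k : ℕ, 1 ≤ k → 1 ≤ m β k)
    (hlin : ∀ β ∈ Set.Ioo (1 / 2 : ℝ) 1, ∀ k : ℕ, 1 ≤ k → m β k ≤ k * m β 1)
    (hm1 : ∀ β ∈ Set.Ioo (1 / 2 : ℝ) 1,
      β / (1 - β) - 2 < (m β 1 : ℝ) ∧ (m β 1 : ℝ) < β / (1 - β) + 1) :
    Tendsto (fun β : ℝ => β * (1 - β) * (1 / β ^ 2) *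
        ∑' j : ℕ, (-(((j : ℝ) + 1) * (((j : ℝ) + 1) + (m β (j + 1) : ℝ))
            * ((β - 1) / β) ^ j)
          - (m β (j + 1) : ℝ) * (((j : ℝ) + 1) + (m β (j + 1) : ℝ))
            * ((β - 1) / β) ^ (j + 1)))
      (𝓝[<] (1 : ℝ)) (𝓝 0) := by
  apply main_part5
  · filter_upwards [Ioo_mem_nhdsLT_of_mem
      (show (1:ℝ) ∈ Set.Ioc (1/2:ℝ) 1 by norm_num)] with β hβ j
    have hβ0 : (0:ℝ) < β := lt_trans (by norm_num) hβ.1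
    have h1β : (0:ℝ) < 1 - β := by linarith [hβ.2]
    have hx0 : 0 < (1-β)/β := div_pos h1β hβ0
    have hx1 : (1-β)/β < 1 := by rw [div_lt_one hβ0]; linarith [hβ.1]
    have habs : |(β-1)/β| = (1-β)/β := by
      rw [abs_of_neg (by apply div_neg_of_neg_of_pos <;> linarith)]
      ring
    set x := (1-β)/β with hxdef
    set r := (β-1)/β with hrdef
    set M : ℝ := (m β (j+1+1) : ℝ) with hMdef
    have hM1 : (1:ℝ) ≤ M := by
      have := hpos β hβ (j+1+1) (by omega)
      rw [hMdef]
      exact_mod_cast this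
    have hMx : x * M ≤ 2*((j:ℝ)+2) := by
      have := mx_bound5 m hlin hm1 β hβ (j+1)
      push_cast at this
      linarith
    have hXj : (0:ℝ) ≤ x^j := by positivity
    have ha : (0:ℝ) ≤ (j:ℝ) := Nat.cast_nonneg j
    have hS0 : (0:ℝ) ≤ ((j:ℝ)+1+1)+M := by linarith
    push_cast
    have e1 : |-((((j:ℝ)+1+1)) * ((((j:ℝ)+1+1))+M) * r^(j+1))|
        = (((j:ℝ)+1+1)) * ((((j:ℝ)+1+1))+M) * x^(j+1) := by
      rw [abs_neg, abs_mul, abs_mul, abs_pow, habs,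
        abs_of_nonneg (by positivity : (0:ℝ) ≤ ((j:ℝ)+1+1)),
        abs_of_nonneg hS0]
    have e2 : |M * ((((j:ℝ)+1+1))+M) * r^(j+1+1)|
        = M * ((((j:ℝ)+1+1))+M) * x^(j+1+1) := by
      rw [abs_mul, abs_mul, abs_pow, habs,
        abs_of_nonneg (by linarith : (0:ℝ) ≤ M), abs_of_nonneg hS0]
    have hSx : x*((((j:ℝ)+1+1))+M) ≤ 3*((j:ℝ)+2) := by
      nlinarith [mul_nonneg (by linarith : (0:ℝ) ≤ 1-x)
        (by positivity : (0:ℝ) ≤ (j:ℝ)+2)]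
    calc |-((((j:ℝ)+1+1)) * ((((j:ℝ)+1+1))+M) * r^(j+1))
          - M * ((((j:ℝ)+1+1))+M) * r^(j+1+1)|
        ≤ |-((((j:ℝ)+1+1)) * ((((j:ℝ)+1+1))+M) * r^(j+1))|
          + |M * ((((j:ℝ)+1+1))+M) * r^(j+1+1)| := abs_sub _ _
      _ = (((j:ℝ)+1+1)) * ((((j:ℝ)+1+1))+M) * x^(j+1)
          + M * ((((j:ℝ)+1+1))+M) * x^(j+1+1) := by rw [e1, e2]
      _ ≤ 100 * ((j:ℝ)+1)^2 * x^j := by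
          rw [pow_succ, pow_succ, pow_succ]
          have hb1 : ((j:ℝ)+1+1) * (((j:ℝ)+1+1)+M) * (x^j*x)
              ≤ 3*((j:ℝ)+2)^2*x^j := by
            calc ((j:ℝ)+1+1) * (((j:ℝ)+1+1)+M) * (x^j*x)
                = ((j:ℝ)+2) * (x*(((j:ℝ)+1+1)+M)) * x^j := by ring
              _ ≤ ((j:ℝ)+2) * (3*((j:ℝ)+2)) * x^j := by
                  refine mul_le_mul_of_nonneg_right ?_ hXj
                  exact mul_le_mul_of_nonneg_left hSx (by positivity)
              _ = 3*((j:ℝ)+2)^2*x^j := by ring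
          have hb2 : M * (((j:ℝ)+1+1)+M) * (x^j*x*x) ≤ 6*((j:ℝ)+2)^2*x^j := by
            calc M * (((j:ℝ)+1+1)+M) * (x^j*x*x)
                = (x*M) * (x*(((j:ℝ)+1+1)+M)) * x^j := by ring
              _ ≤ (2*((j:ℝ)+2)) * (3*((j:ℝ)+2)) * x^j := by
                  refine mul_le_mul_of_nonneg_right ?_ hXj
                  exact mul_le_mul hMx hSx (mul_nonneg hx0.le hS0) (by positivity)
              _ = 6*((j:ℝ)+2)^2*x^j := by ring
          have hsq2 : ((j:ℝ)+2)^2*x^j ≤ 4*((j:ℝ)+1)^2*x^j := by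
            have h : ((j:ℝ)+2)^2 ≤ 4*((j:ℝ)+1)^2 := by nlinarith
            exact mul_le_mul_of_nonneg_right h hXj
          have hP : (0:ℝ) ≤ ((j:ℝ)+1)^2*x^j := by positivity
          linarith
  · have hv := head_v5 m hm1
    have hlim : Tendsto (fun β : ℝ =>
        -((1-β)/β + ((1-β)/β)*(m β 1:ℝ))
        + (((1-β)/β)*(m β 1:ℝ)) * ((1-β)/β + ((1-β)/β)*(m β 1:ℝ)))
        (𝓝[<] (1:ℝ)) (𝓝 (-(0+1) + 1*(0+1))) :=
      ((tendsto_x5.add hv).neg).add (hv.mul (tendsto_x5.add hv))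
    norm_num at hlim
    refine Tendsto.congr (fun β => ?_) hlim
    show _ = ((1-β)/β) * _
    norm_num
    ring

lemma part_c5 (m : ℝ → ℕ → ℕ)
    (hpos : ∀ β ∈ Set.Ioo (1 / 2 : ℝ) 1, ∀ k : ℕ, 1 ≤ k → 1 ≤ m β k)
    (hlin : ∀ β ∈ Set.Ioo (1 / 2 : ℝ) 1, ∀ k : ℕ, 1 ≤ k → m β k ≤ k * m β 1)
    (hm1 : ∀ β ∈ Set.Ioo (1 / 2 : ℝ) 1,
      β / (1 - β) - 2 < (m β 1 : ℝ) ∧ (m β 1 : ℝ) < β / (1 - β) + 1) :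
    Tendsto (fun β : ℝ => β * (1 - β) * (1 / β ^ 2) *
        ∑' j : ℕ, ((((j : ℝ) + 1) + (m β (j + 1) : ℝ))
          * ((((j : ℝ) + 1) + (m β (j + 1) : ℝ)) + 1) * ((β - 1) / β) ^ (j + 1)))
      (𝓝[<] (1 : ℝ)) (𝓝 (-1)) := by
  apply main_part5
  · filter_upwards [Ioo_mem_nhdsLT_of_mem
      (show (1:ℝ) ∈ Set.Ioc (1/2:ℝ) 1 by norm_num)] with β hβ j
    have hβ0 : (0:ℝ) < β := lt_trans (by norm_num) hβ.1
    have h1β : (0:ℝ) < 1 - β := by linarith [hβ.2]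
    have hx0 : 0 < (1-β)/β := div_pos h1β hβ0
    have hx1 : (1-β)/β < 1 := by rw [div_lt_one hβ0]; linarith [hβ.1]
    have habs : |(β-1)/β| = (1-β)/β := by
      rw [abs_of_neg (by apply div_neg_of_neg_of_pos <;> linarith)]
      ring
    set x := (1-β)/β with hxdef
    set r := (β-1)/β with hrdef
    set M : ℝ := (m β (j+1+1) : ℝ) with hMdef
    have hM1 : (1:ℝ) ≤ M := by
      have := hpos β hβ (j+1+1) (by omega)
      rw [hMdef]
      exact_mod_cast this
    have hMx : x * M ≤ 2*((j:ℝ)+2) := by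
      have := mx_bound5 m hlin hm1 β hβ (j+1)
      push_cast at this
      linarith
    have hXj : (0:ℝ) ≤ x^j := by positivity
    have ha : (0:ℝ) ≤ (j:ℝ) := Nat.cast_nonneg j
    have hS0 : (0:ℝ) ≤ ((j:ℝ)+1+1)+M := by linarith
    push_cast
    have e1 : |((((j:ℝ)+1+1))+M) * (((((j:ℝ)+1+1))+M)+1) * r^(j+1+1)|
        = ((((j:ℝ)+1+1))+M) * (((((j:ℝ)+1+1))+M)+1) * x^(j+1+1) := by
      rw [abs_mul, abs_mul, abs_pow, habs, abs_of_nonneg hS0,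
        abs_of_nonneg (by linarith : (0:ℝ) ≤ (((j:ℝ)+1+1)+M)+1)]
    have hSx : x*((((j:ℝ)+1+1))+M) ≤ 3*((j:ℝ)+2) := by
      nlinarith [mul_nonneg (by linarith : (0:ℝ) ≤ 1-x)
        (by positivity : (0:ℝ) ≤ (j:ℝ)+2)]
    have hSx1 : x*(((((j:ℝ)+1+1))+M)+1) ≤ 4*((j:ℝ)+2) := by
      have hxle : x*(1:ℝ) ≤ (j:ℝ)+2 := by nlinarith
      nlinarith
    calc |((((j:ℝ)+1+1))+M) * (((((j:ℝ)+1+1))+M)+1) * r^(j+1+1)|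
        = ((((j:ℝ)+1+1))+M) * (((((j:ℝ)+1+1))+M)+1) * x^(j+1+1) := e1
      _ ≤ 100 * ((j:ℝ)+1)^2 * x^j := by
          rw [pow_succ, pow_succ]
          have hb1 : ((((j:ℝ)+1+1))+M) * (((((j:ℝ)+1+1))+M)+1) * (x^j*x*x)
              ≤ 12*((j:ℝ)+2)^2*x^j := by
            calc ((((j:ℝ)+1+1))+M) * (((((j:ℝ)+1+1))+M)+1) * (x^j*x*x)
                = (x*(((j:ℝ)+1+1)+M)) * (x*((((j:ℝ)+1+1)+M)+1)) * x^j := by ring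
              _ ≤ (3*((j:ℝ)+2)) * (4*((j:ℝ)+2)) * x^j := by
                  refine mul_le_mul_of_nonneg_right ?_ hXj
                  exact mul_le_mul hSx hSx1
                    (mul_nonneg hx0.le (by linarith)) (by positivity)
              _ = 12*((j:ℝ)+2)^2*x^j := by ring
          have hsq2 : ((j:ℝ)+2)^2*x^j ≤ 4*((j:ℝ)+1)^2*x^j := by
            have h : ((j:ℝ)+2)^2 ≤ 4*((j:ℝ)+1)^2 := by nlinarith
            exact mul_le_mul_of_nonneg_right h hXj
          have hP : (0:ℝ) ≤ ((j:ℝ)+1)^2*x^j := by positivity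
          linarith
  · have hv := head_v5 m hm1
    have hlim : Tendsto (fun β : ℝ =>
        -(((1-β)/β + ((1-β)/β)*(m β 1:ℝ))
          * (2*((1-β)/β) + ((1-β)/β)*(m β 1:ℝ))))
        (𝓝[<] (1:ℝ)) (𝓝 (-((0+1) * (2*0+1)))) :=
      ((tendsto_x5.add hv).mul ((tendsto_x5.const_mul 2).add hv)).neg
    norm_num at hlim
    replace hlim := hlim.neg
    refine Tendsto.congr (fun β => ?_) hlim
    show _ = ((1-β)/β) * _
    norm_num
    ring

/-- For each `β ∈ (1/2,1)` fix a nondecreasing sequence of positive integers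
`(m̄_k^β)` with `m̄_k^β ≤ k·m̄_1^β` and `β/(1-β) - 2 < m̄_1^β < β/(1-β) + 1`.
With `r = (β-1)/β`, the three rescaled sums (the rescaled second partials
`∂²_α Θ^β`, `∂_α∂_β Θ^β`, `∂²_β Θ^β` at `(β,β)`) tend to `1`, `0`, `-1`
respectively as `β → 1⁻`. -/
theorem stmt5 (m : ℝ → ℕ → ℕ)
    (hpos : ∀ β ∈ Set.Ioo (1 / 2 : ℝ) 1, ∀ k : ℕ, 1 ≤ k → 1 ≤ m β k)
    (hmono : ∀ β ∈ Set.Ioo (1 / 2 : ℝ) 1, ∀ k l : ℕ, 1 ≤ k → k ≤ l → m β k ≤ m β l)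
    (hlin : ∀ β ∈ Set.Ioo (1 / 2 : ℝ) 1, ∀ k : ℕ, 1 ≤ k → m β k ≤ k * m β 1)
    (hm1 : ∀ β ∈ Set.Ioo (1 / 2 : ℝ) 1,
      β / (1 - β) - 2 < (m β 1 : ℝ) ∧ (m β 1 : ℝ) < β / (1 - β) + 1) :
    Tendsto (fun β : ℝ => β * (1 - β) * (1 / β ^ 2) *
        ∑' j : ℕ, (((j : ℝ) + 1) * j * ((β - 1) / β) ^ (j - 1)
          + 2 * ((j : ℝ) + 1) * (m β (j + 1) : ℝ) * ((β - 1) / β) ^ j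
          + (m β (j + 1) : ℝ) * ((m β (j + 1) : ℝ) - 1) * ((β - 1) / β) ^ (j + 1)))
      (𝓝[<] (1 : ℝ)) (𝓝 1) ∧
    Tendsto (fun β : ℝ => β * (1 - β) * (1 / β ^ 2) *
        ∑' j : ℕ, (-(((j : ℝ) + 1) * (((j : ℝ) + 1) + (m β (j + 1) : ℝ))
            * ((β - 1) / β) ^ j)
          - (m β (j + 1) : ℝ) * (((j : ℝ) + 1) + (m β (j + 1) : ℝ))
            * ((β - 1) / β) ^ (j + 1)))
      (𝓝[<] (1 : ℝ)) (𝓝 0) ∧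
    Tendsto (fun β : ℝ => β * (1 - β) * (1 / β ^ 2) *
        ∑' j : ℕ, ((((j : ℝ) + 1) + (m β (j + 1) : ℝ))
          * ((((j : ℝ) + 1) + (m β (j + 1) : ℝ)) + 1) * ((β - 1) / β) ^ (j + 1)))
      (𝓝[<] (1 : ℝ)) (𝓝 (-1)) :=
  ⟨part_a5 m hpos hlin hm1, part_b5 m hpos hlin hm1, part_c5 m hpos hlin hm1⟩
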